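/- Let p ≥ 2 and 1 ≤ k ≤ p−1. Let α = (r_j, d_j, w_j)_{j=1,…,p} be triples of real numbers with w_1 < w_2 < ⋯ < w_p and, for each j, either r_j > 0 or (r_j = 0 and d_j > 0). Set R = Σ_j r_j, D = Σ_j d_j, L(α) = Σ_j w_j (R d_j − D r_j), B(α) = Σ_j w_j² r_j, and μ(α) = L(α)/√(B(α)) when B(α) > 0. Assume r_k + r_{k+1} > 0 and let α′ be the length-(p−1) sequence obtained from α by deleting the (k+1)-st entry and replacing the k-th entry by (r_k + r_{k+1}, d_k + d_{k+1}, (w_k r_k + w_{k+1} r_{k+1})/(r_k + r_{k+1})), all other entries unchanged; assume B(α′) > 0 (whence B(α) > 0 and the weights of α′ are strictly increasing). Then: (1) If μ(α) ≥ 0 and d_k r_{k+1} − r_k d_{k+1} ≥ 0, then μ(α′) ≥ μ(α), with equality if and only if d_k r_{k+1} = r_k d_{k+1} and μ(α) = 0. (2) Conversely, let β = (r′_j, d′_j, w′_j)_{j=1,…,p−1} be such a sequence with B(β) > 0 and μ(β) ≥ 0, and suppose its k-th entry is split as r′_k = r_k + r_{k+1}, d′_k = d_k + d_{k+1}, where each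 of (r_k, d_k) and (r_{k+1}, d_{k+1}) satisfies (r > 0 or (r = 0 and d > 0)), r_k + r_{k+1} > 0, and d_k r_{k+1} − r_k d_{k+1} < 0. Then for all sufficiently small δ > 0, the length-p sequence α obtained from β by replacing the k-th entry by the two entries (r_k, d_k, w_k) and (r_{k+1}, d_{k+1}, w_{k+1}), where w_{k+1} − w_k = δ and (w_k r_k + w_{k+1} r_{k+1})/(r_k + r_{k+1}) = w′_k, has strictly increasing weights and satisfies μ(α) > μ(β). -/

import Mathlib

/-- The numerical invariant `μ = L/√B` of a rank–degree–weight sequence, where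
`L = ∑ⱼ wⱼ (R dⱼ − D rⱼ)` with `R = ∑ rⱼ`, `D = ∑ dⱼ`, and `B = ∑ⱼ wⱼ² rⱼ`. -/
noncomputable def seqMu {p : ℕ} (r d w : Fin p → ℝ) : ℝ :=
  (∑ j, w j * ((∑ i, r i) * d j - (∑ i, d i) * r j)) / Real.sqrt (∑ j, (w j) ^ 2 * r j)

/-- Delete the `(k+1)`-st entry (0-based) of a sequence of length `q+1`, replacing the
`k`-th entry by the value `v`. -/
def mergeAt {q : ℕ} (k : ℕ) (f : Fin (q + 1) → ℝ) (v : ℝ) : Fin q → ℝ := fun j =>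
  if j.1 < k then f ⟨j.1, Nat.lt_succ_of_lt j.2⟩
  else if j.1 = k then v
  else f ⟨j.1 + 1, Nat.succ_lt_succ j.2⟩

/-- The merged rank (or degree) sequence: entries `k`, `k+1` are replaced by their sum. -/
noncomputable def rMerge {q : ℕ} (k : ℕ) (hk : k < q) (r : Fin (q + 1) → ℝ) : Fin q → ℝ :=
  mergeAt k r (r ⟨k, Nat.lt_succ_of_lt hk⟩ + r ⟨k + 1, Nat.succ_lt_succ hk⟩)

/-- The merged weight sequence: entries `k`, `k+1` of `w` are replaced by the `r`-weighted
average `(wₖ rₖ + wₖ₊₁ rₖ₊₁)/(rₖ + rₖ₊₁)`. -/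
noncomputable def wMerge {q : ℕ} (k : ℕ) (hk : k < q) (r w : Fin (q + 1) → ℝ) : Fin q → ℝ :=
  mergeAt k w
    ((w ⟨k, Nat.lt_succ_of_lt hk⟩ * r ⟨k, Nat.lt_succ_of_lt hk⟩ +
        w ⟨k + 1, Nat.succ_lt_succ hk⟩ * r ⟨k + 1, Nat.succ_lt_succ hk⟩) /
      (r ⟨k, Nat.lt_succ_of_lt hk⟩ + r ⟨k + 1, Nat.succ_lt_succ hk⟩))

/-- Split the `k`-th entry of a sequence of length `q` into the two entries `a`, `b`,
producing a sequence of length `q+1`. -/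
def expandAt {q : ℕ} (k : ℕ) (hk : k < q) (f : Fin q → ℝ) (a b : ℝ) : Fin (q + 1) → ℝ :=
  fun j =>
    if h : j.1 < k then f ⟨j.1, h.trans hk⟩
    else if h2 : j.1 = k then a
    else if h3 : j.1 = k + 1 then b
    else f ⟨j.1 - 1, by have hj := j.2; omega⟩

section AuxLemmas

open Finset

lemma sum_mergeNat_aux {q : ℕ} (k : ℕ) (hk : k < q) (F : ℕ → ℝ) (v : ℝ) :
    ∑ j ∈ range q, (if j < k then F j else if j = k then v else F (j+1))
      = (∑ j ∈ range (q+1), F j) - F k - F (k+1) + v := by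
  have key : ∀ (G : ℕ → ℝ) (n : ℕ), k < n →
      ∑ j ∈ range n, G j = (∑ j ∈ range k, G j) + (G k + ∑ j ∈ Ico (k+1) n, G j) := by
    intro G n hn
    rw [range_eq_Ico, ← sum_Ico_consecutive G (Nat.zero_le k) (le_of_lt hn), ← range_eq_Ico,
      sum_eq_sum_Ico_succ_bot hn]
  rw [key _ q hk, key F (q+1) (by omega), sum_eq_sum_Ico_succ_bot (show k+1 < q+1 by omega)]
  have h1 : ∑ j ∈ range k, (if j < k then F j else if j = k then v else F (j+1))
      = ∑ j ∈ range k, F j := by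
    apply sum_congr rfl; intro j hj
    rw [if_pos (mem_range.mp hj)]
  have h2 : ∑ j ∈ Ico (k+1) q, (if j < k then F j else if j = k then v else F (j+1))
      = ∑ j ∈ Ico (k+2) (q+1), F j := by
    rw [sum_Ico_eq_sum_range, sum_Ico_eq_sum_range]
    have hq : q - (k+1) = q + 1 - (k+2) := by omega
    rw [hq]
    apply sum_congr rfl; intro i _
    rw [if_neg (by omega), if_neg (by omega)]
    congr 1; omega
  rw [h1, h2, if_neg (by omega), if_pos rfl]
  ring

lemma sum_mergeAt {q : ℕ} (k : ℕ) (hk : k < q) (F : Fin (q+1) → ℝ) (v : ℝ) :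
    ∑ j, mergeAt k F v j
      = (∑ j, F j) - F ⟨k, Nat.lt_succ_of_lt hk⟩ - F ⟨k+1, Nat.succ_lt_succ hk⟩ + v := by
  set G : ℕ → ℝ := fun n => if h : n < q + 1 then F ⟨n, h⟩ else 0 with hG
  have hF : ∀ j : Fin (q+1), F j = G j.1 := by
    intro j; rw [hG]; exact (dif_pos (c := (j.1 < q + 1)) (t := fun h => F ⟨j.1, h⟩) (e := fun _ => (0:ℝ)) j.2).symm
  have h1 : ∑ j, mergeAt k F v j
      = ∑ j ∈ range q, (if j < k then G j else if j = k then v else G (j+1)) := by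
    rw [← Fin.sum_univ_eq_sum_range]
    apply sum_congr rfl
    intro j _
    unfold mergeAt
    split_ifs with hc1 hc2
    · exact hF _
    · rfl
    · exact hF _
  have h2 : ∑ j, F j = ∑ j ∈ range (q+1), G j := by
    rw [← Fin.sum_univ_eq_sum_range]
    exact sum_congr rfl fun j _ => hF j
  rw [h1, sum_mergeNat_aux k hk G v, ← h2, ← hF ⟨k, Nat.lt_succ_of_lt hk⟩,
    ← hF ⟨k+1, Nat.succ_lt_succ hk⟩]

lemma mergeAt_comb {q : ℕ} (k : ℕ) (G : ℝ → ℝ → ℝ → ℝ) (f g h : Fin (q+1) → ℝ)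
    (vf vg vh : ℝ) (j : Fin q) :
    G (mergeAt k f vf j) (mergeAt k g vg j) (mergeAt k h vh j)
      = mergeAt k (fun i => G (f i) (g i) (h i)) (G vf vg vh) j := by
  unfold mergeAt; split_ifs <;> rfl

lemma Lmerge_id (R D rk rk1 dk dk1 wk wk1 : ℝ) (hs : rk + rk1 ≠ 0) :
    (wk*rk + wk1*rk1)/(rk+rk1) * (R*(dk+dk1) - D*(rk+rk1))
      = wk*(R*dk - D*rk) + wk1*(R*dk1 - D*rk1)
        + (wk1 - wk) * R * (dk*rk1 - rk*dk1) / (rk+rk1) := by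
  field_simp; ring

lemma Bmerge_id (rk rk1 wk wk1 : ℝ) (hs : rk + rk1 ≠ 0) :
    ((wk*rk + wk1*rk1)/(rk+rk1))^2 * (rk+rk1)
      = wk^2*rk + wk1^2*rk1 - (wk1-wk)^2 * rk * rk1 / (rk+rk1) := by
  field_simp; ring

lemma sum_rMerge {q : ℕ} (k : ℕ) (hk : k < q) (r : Fin (q+1) → ℝ) :
    ∑ j, rMerge k hk r j = ∑ j, r j := by
  unfold rMerge
  rw [sum_mergeAt k hk]
  ring

lemma sum_B_merge {q : ℕ} (k : ℕ) (hk : k < q) (r w : Fin (q+1) → ℝ)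
    (hs : r ⟨k, Nat.lt_succ_of_lt hk⟩ + r ⟨k+1, Nat.succ_lt_succ hk⟩ ≠ 0) :
    ∑ j, (wMerge k hk r w j)^2 * rMerge k hk r j
      = (∑ j, (w j)^2 * r j)
        - (w ⟨k+1, Nat.succ_lt_succ hk⟩ - w ⟨k, Nat.lt_succ_of_lt hk⟩)^2
            * r ⟨k, Nat.lt_succ_of_lt hk⟩ * r ⟨k+1, Nat.succ_lt_succ hk⟩
            / (r ⟨k, Nat.lt_succ_of_lt hk⟩ + r ⟨k+1, Nat.succ_lt_succ hk⟩) := by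
  unfold wMerge rMerge
  rw [sum_congr rfl fun j _ => mergeAt_comb k (fun a _ c => c^2 * a) r r w _ 0 _ j,
    sum_mergeAt k hk]
  rw [Bmerge_id _ _ _ _ hs]
  ring

lemma sum_L_merge {q : ℕ} (k : ℕ) (hk : k < q) (r d w : Fin (q+1) → ℝ) (R D : ℝ)
    (hs : r ⟨k, Nat.lt_succ_of_lt hk⟩ + r ⟨k+1, Nat.succ_lt_succ hk⟩ ≠ 0) :
    ∑ j, wMerge k hk r w j * (R * rMerge k hk d j - D * rMerge k hk r j)
      = (∑ j, w j * (R * d j - D * r j))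
        + (w ⟨k+1, Nat.succ_lt_succ hk⟩ - w ⟨k, Nat.lt_succ_of_lt hk⟩) * R
            * (d ⟨k, Nat.lt_succ_of_lt hk⟩ * r ⟨k+1, Nat.succ_lt_succ hk⟩
                - r ⟨k, Nat.lt_succ_of_lt hk⟩ * d ⟨k+1, Nat.succ_lt_succ hk⟩)
            / (r ⟨k, Nat.lt_succ_of_lt hk⟩ + r ⟨k+1, Nat.succ_lt_succ hk⟩) := by
  unfold wMerge rMerge
  rw [sum_congr rfl fun j _ => mergeAt_comb k (fun a b c => c * (R * b - D * a)) r d w _ _ _ j,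
    sum_mergeAt k hk]
  rw [Lmerge_id _ _ _ _ _ _ _ _ hs]
  ring

lemma expandAt_apply_k {q : ℕ} (k : ℕ) (hk : k < q) (f : Fin q → ℝ) (a b : ℝ) (h : k < q+1) :
    expandAt k hk f a b ⟨k, h⟩ = a := by
  simp only [expandAt, Fin.val_mk]
  rw [dif_neg (by omega)]
  simp

lemma expandAt_apply_k1 {q : ℕ} (k : ℕ) (hk : k < q) (f : Fin q → ℝ) (a b : ℝ)
    (h : k + 1 < q + 1) : expandAt k hk f a b ⟨k+1, h⟩ = b := by
  simp only [expandAt, Fin.val_mk]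
  rw [dif_neg (by omega), dif_neg (by omega)]
  simp

lemma mergeAt_expandAt {q : ℕ} (k : ℕ) (hk : k < q) (f : Fin q → ℝ) (a b v : ℝ)
    (hv : f ⟨k, hk⟩ = v) : mergeAt k (expandAt k hk f a b) v = f := by
  funext j
  simp only [mergeAt, expandAt, Fin.val_mk]
  split_ifs <;> first
    | rfl
    | omega
    | (rw [← hv]; exact congrArg f (Fin.ext (by simp only [Fin.val_mk]; omega)))

set_option linter.unreachableTactic false in
set_option linter.unusedTactic false in
lemma strictMono_expandAt {q : ℕ} (k : ℕ) (hk : k < q) (w' : Fin q → ℝ) (wk wk1 : ℝ)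
    (hL : ∀ _ : 0 < k, w' ⟨k-1, by omega⟩ < wk)
    (hm : wk < wk1)
    (hR : ∀ h : k+1 < q, wk1 < w' ⟨k+1, h⟩)
    (hw : StrictMono w') :
    StrictMono (expandAt k hk w' wk wk1) := by
  rw [Fin.strictMono_iff_lt_succ]
  intro i
  have hi2 := i.2
  simp only [expandAt, Fin.coe_castSucc, Fin.val_succ, Fin.val_mk]
  split_ifs <;> first
    | omega
    | exact hm
    | (exact hw (Fin.mk_lt_mk.mpr (by omega)))
    | ((convert hL (by omega) using 3) <;> first | rfl | omega)
    | ((convert hR (by omega) using 3) <;> first | rfl | omega)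

end AuxLemmas

open Finset in
set_option maxHeartbeats 1000000 in
theorem insertion_deletion_rank_degree_weight {q : ℕ} (k : ℕ) (hk : k < q) :
    (∀ r d w : Fin (q + 1) → ℝ,
      StrictMono w →
      (∀ j, 0 < r j ∨ (r j = 0 ∧ 0 < d j)) →
      0 < r ⟨k, by omega⟩ + r ⟨k + 1, by omega⟩ →
      0 < ∑ j, (wMerge k hk r w j) ^ 2 * rMerge k hk r j →
      0 ≤ seqMu r d w →
      0 ≤ d ⟨k, by omega⟩ * r ⟨k + 1, by omega⟩ - r ⟨k, by omega⟩ * d ⟨k + 1, by omega⟩ →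
      seqMu r d w ≤ seqMu (rMerge k hk r) (rMerge k hk d) (wMerge k hk r w) ∧
        (seqMu (rMerge k hk r) (rMerge k hk d) (wMerge k hk r w) = seqMu r d w ↔
          d ⟨k, by omega⟩ * r ⟨k + 1, by omega⟩ = r ⟨k, by omega⟩ * d ⟨k + 1, by omega⟩ ∧
            seqMu r d w = 0)) ∧
    (∀ r' d' w' : Fin q → ℝ,
      (∀ j, 0 < r' j ∨ (r' j = 0 ∧ 0 < d' j)) →
      StrictMono w' →
      0 < ∑ j, (w' j) ^ 2 * r' j →
      0 ≤ seqMu r' d' w' →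
      ∀ rk dk rk1 dk1 : ℝ,
        (0 < rk ∨ (rk = 0 ∧ 0 < dk)) →
        (0 < rk1 ∨ (rk1 = 0 ∧ 0 < dk1)) →
        0 < rk + rk1 →
        r' ⟨k, hk⟩ = rk + rk1 →
        d' ⟨k, hk⟩ = dk + dk1 →
        dk * rk1 - rk * dk1 < 0 →
        ∃ δ₀ : ℝ, 0 < δ₀ ∧ ∀ δ : ℝ, 0 < δ → δ < δ₀ →
          ∀ wk wk1 : ℝ, wk1 - wk = δ →
            (wk * rk + wk1 * rk1) / (rk + rk1) = w' ⟨k, hk⟩ →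
            StrictMono (expandAt k hk w' wk wk1) ∧
              seqMu r' d' w' <
                seqMu (expandAt k hk r' rk rk1) (expandAt k hk d' dk dk1)
                  (expandAt k hk w' wk wk1)) := by
  constructor
  · -- Part (1): deletion
    intro r d w hw hpos hs hBm hmu hD
    have hs' : (0:ℝ) < r ⟨k, Nat.lt_succ_of_lt hk⟩ + r ⟨k+1, Nat.succ_lt_succ hk⟩ := hs
    have hD' : (0:ℝ) ≤ d ⟨k, Nat.lt_succ_of_lt hk⟩ * r ⟨k+1, Nat.succ_lt_succ hk⟩
        - r ⟨k, Nat.lt_succ_of_lt hk⟩ * d ⟨k+1, Nat.succ_lt_succ hk⟩ := hD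
    have hsne : r ⟨k, Nat.lt_succ_of_lt hk⟩ + r ⟨k+1, Nat.succ_lt_succ hk⟩ ≠ 0 := ne_of_gt hs'
    have hrnn : ∀ j, 0 ≤ r j := fun j => by rcases hpos j with h|h; exacts [h.le, h.1.ge]
    simp only [seqMu] at hmu ⊢
    rw [sum_rMerge k hk r, sum_rMerge k hk d,
      sum_L_merge k hk r d w (∑ i, r i) (∑ i, d i) hsne, sum_B_merge k hk r w hsne]
    rw [sum_B_merge k hk r w hsne] at hBm
    set rk := r (⟨k, Nat.lt_succ_of_lt hk⟩ : Fin (q+1)) with hrkdef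
    set rk1 := r (⟨k+1, Nat.succ_lt_succ hk⟩ : Fin (q+1)) with hrk1def
    set dk := d (⟨k, Nat.lt_succ_of_lt hk⟩ : Fin (q+1)) with hdkdef
    set dk1 := d (⟨k+1, Nat.succ_lt_succ hk⟩ : Fin (q+1)) with hdk1def
    set wk := w (⟨k, Nat.lt_succ_of_lt hk⟩ : Fin (q+1)) with hwkdef
    set wk1 := w (⟨k+1, Nat.succ_lt_succ hk⟩ : Fin (q+1)) with hwk1def
    set R := ∑ i, r i with hRdef
    set Dd := ∑ i, d i with hDdef
    set L := ∑ j, w j * (R * d j - Dd * r j) with hLdef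
    set B := ∑ j, w j ^ 2 * r j with hBdef
    have hδ : 0 < wk1 - wk := by
      have := hw (show (⟨k, Nat.lt_succ_of_lt hk⟩ : Fin (q+1)) < ⟨k+1, Nat.succ_lt_succ hk⟩
        from Fin.mk_lt_mk.mpr (Nat.lt_succ_self k))
      simpa [hwkdef, hwk1def] using sub_pos.mpr this
    have hQnn : 0 ≤ (wk1-wk)^2 * rk * rk1 / (rk + rk1) := by
      apply div_nonneg _ hs'.le
      apply mul_nonneg (mul_nonneg (sq_nonneg _) _) _
      · exact hrnn _
      · exact hrnn _
    have hBpos : 0 < B := by linarith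
    have hsB : 0 < Real.sqrt B := Real.sqrt_pos.mpr hBpos
    have hsB' : 0 < Real.sqrt (B - (wk1-wk)^2 * rk * rk1 / (rk + rk1)) :=
      Real.sqrt_pos.mpr hBm
    have hsBle : Real.sqrt (B - (wk1-wk)^2 * rk * rk1 / (rk + rk1)) ≤ Real.sqrt B :=
      Real.sqrt_le_sqrt (by linarith)
    have hrKle : rk ≤ R := by
      rw [hRdef, hrkdef]; exact Finset.single_le_sum (fun i _ => hrnn i) (mem_univ _)
    have hrK1le : rk1 ≤ R := by
      rw [hRdef, hrk1def]; exact Finset.single_le_sum (fun i _ => hrnn i) (mem_univ _)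
    have hRpos : 0 < R := by
      rcases lt_or_ge 0 rk with h|h
      · linarith
      · linarith
    have hLnn : 0 ≤ L := by
      have h1 := mul_nonneg hmu (Real.sqrt_nonneg B)
      rwa [div_mul_cancel₀ _ (ne_of_gt hsB)] at h1
    have hPnn : 0 ≤ (wk1 - wk) * R * (dk * rk1 - rk * dk1) / (rk + rk1) :=
      div_nonneg (mul_nonneg (mul_nonneg hδ.le hRpos.le) hD') hs'.le
    refine ⟨div_le_div₀ (by linarith) (by linarith) hsB' hsBle, ?_⟩
    constructor
    · intro hEq
      have hcross : (L + (wk1 - wk) * R * (dk * rk1 - rk * dk1) / (rk + rk1)) * Real.sqrt B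
          = L * Real.sqrt (B - (wk1-wk)^2 * rk * rk1 / (rk + rk1)) :=
        (div_eq_div_iff (ne_of_gt hsB') (ne_of_gt hsB)).mp hEq
      have h2 : (L + (wk1 - wk) * R * (dk * rk1 - rk * dk1) / (rk + rk1)) * Real.sqrt B
          ≤ L * Real.sqrt B := by
        rw [hcross]; exact mul_le_mul_of_nonneg_left hsBle hLnn
      have hPle : L + (wk1 - wk) * R * (dk * rk1 - rk * dk1) / (rk + rk1) ≤ L :=
        le_of_mul_le_mul_right h2 hsB
      have hP0 : (wk1 - wk) * R * (dk * rk1 - rk * dk1) / (rk + rk1) = 0 := by linarith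
      have hΔ0 : dk * rk1 - rk * dk1 = 0 := by
        rcases div_eq_zero_iff.mp hP0 with h|h
        · rcases mul_eq_zero.mp h with h'|h'
          · exact absurd h' (ne_of_gt (mul_pos hδ hRpos))
          · exact h'
        · exact absurd h hsne
      refine ⟨sub_eq_zero.mp hΔ0, ?_⟩
      have h4 : L * Real.sqrt B = L * Real.sqrt (B - (wk1-wk)^2 * rk * rk1 / (rk + rk1)) := by
        rw [hP0, add_zero] at hcross; exact hcross
      have h5 : L * (Real.sqrt B - Real.sqrt (B - (wk1-wk)^2 * rk * rk1 / (rk + rk1))) = 0 := by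
        rw [mul_sub]; linarith
      rcases mul_eq_zero.mp h5 with h6|h6
      · rw [h6, zero_div]
      · exfalso
        have h7 : Real.sqrt B = Real.sqrt (B - (wk1-wk)^2 * rk * rk1 / (rk + rk1)) := by
          linarith
        have h8 : B = B - (wk1-wk)^2 * rk * rk1 / (rk + rk1) := by
          have := congrArg (· ^ 2) h7
          simpa [Real.sq_sqrt hBpos.le, Real.sq_sqrt hBm.le] using this
        have hQ0 : (wk1-wk)^2 * rk * rk1 / (rk + rk1) = 0 := by linarith
        have h9 : (wk1-wk)^2 * rk * rk1 = 0 := by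
          rcases div_eq_zero_iff.mp hQ0 with h|h
          · exact h
          · exact absurd h hsne
        have hδ2 : (wk1-wk)^2 ≠ 0 := pow_ne_zero 2 (ne_of_gt hδ)
        have h10 : rk * rk1 = 0 := by
          rw [mul_assoc] at h9
          exact (mul_eq_zero.mp h9).resolve_left hδ2
        rcases mul_eq_zero.mp h10 with h11|h11
        · rcases hpos ⟨k, Nat.lt_succ_of_lt hk⟩ with hp|hp
          · rw [← hrkdef] at hp; exact absurd h11 (ne_of_gt hp)
          · rw [← hrkdef] at hp
            rw [← hdkdef] at hp
            have hrk1pos : 0 < rk1 := by linarith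
            have hz : rk * dk1 = 0 := by rw [h11]; ring
            linarith [mul_pos hp.2 hrk1pos]
        · rcases hpos ⟨k+1, Nat.succ_lt_succ hk⟩ with hp|hp
          · rw [← hrk1def] at hp; exact absurd h11 (ne_of_gt hp)
          · rw [← hrk1def] at hp
            rw [← hdk1def] at hp
            have hrkpos : 0 < rk := by linarith
            have hz : dk * rk1 = 0 := by rw [h11]; ring
            linarith [mul_pos hrkpos hp.2]
    · rintro ⟨hΔeq, hmu0⟩
      have hL0 : L = 0 := by
        rcases div_eq_zero_iff.mp hmu0 with h|h
        · exact h
        · exact absurd h (ne_of_gt hsB)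
      have hΔ0 : dk * rk1 - rk * dk1 = 0 := sub_eq_zero.mpr hΔeq
      rw [hL0, hΔ0]
      simp
  · -- Part (2): insertion
    intro r' d' w' hpos hw hB hmu rk dk rk1 dk1 hpk hpk1 hs hrsum hdsum hDneg
    have hsne : rk + rk1 ≠ 0 := ne_of_gt hs
    have hrknn : 0 ≤ rk := by rcases hpk with h|h; exacts [h.le, h.1.ge]
    have hrk1nn : 0 ≤ rk1 := by rcases hpk1 with h|h; exacts [h.le, h.1.ge]
    have hrnn : ∀ j, 0 ≤ r' j := fun j => by rcases hpos j with h|h; exacts [h.le, h.1.ge]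
    simp only [seqMu] at hmu
    set R := ∑ i, r' i with hRdef
    set Dd := ∑ i, d' i with hDdef
    set L := ∑ j, w' j * (R * d' j - Dd * r' j) with hLdef
    set B := ∑ j, w' j ^ 2 * r' j with hBdef
    have hBpos : 0 < B := hB
    have hsB : 0 < Real.sqrt B := Real.sqrt_pos.mpr hBpos
    have hLnn : 0 ≤ L := by
      have h1 := mul_nonneg hmu (Real.sqrt_nonneg B)
      rwa [div_mul_cancel₀ _ (ne_of_gt hsB)] at h1
    have hrKle : r' ⟨k, hk⟩ ≤ R := by
      rw [hRdef]; exact Finset.single_le_sum (fun i _ => hrnn i) (mem_univ _)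
    have hRpos : 0 < R := by rw [hrsum] at hrKle; linarith
    set c := R * (rk * dk1 - dk * rk1) / (rk + rk1) with hcdef
    have hcpos : 0 < c := by
      apply div_pos _ hs
      exact mul_pos hRpos (by linarith)
    set e := rk * rk1 / (rk + rk1) with hedef
    have henn : 0 ≤ e := div_nonneg (mul_nonneg hrknn hrk1nn) hs.le
    obtain ⟨gL, hgL0, hgLle⟩ :
        ∃ g, 0 < g ∧ ∀ _ : 0 < k, g ≤ w' ⟨k, hk⟩ - w' ⟨k-1, by omega⟩ := by
      by_cases h : 0 < k
      · exact ⟨w' ⟨k, hk⟩ - w' ⟨k-1, by omega⟩,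
          sub_pos.mpr (hw (Fin.mk_lt_mk.mpr (by omega))), fun _ => le_refl _⟩
      · exact ⟨1, one_pos, fun h' => absurd h' h⟩
    obtain ⟨gR, hgR0, hgRle⟩ :
        ∃ g, 0 < g ∧ ∀ h : k+1 < q, g ≤ w' ⟨k+1, h⟩ - w' ⟨k, hk⟩ := by
      by_cases h : k+1 < q
      · exact ⟨w' ⟨k+1, h⟩ - w' ⟨k, hk⟩,
          sub_pos.mpr (hw (Fin.mk_lt_mk.mpr (by omega))), fun _ => le_refl _⟩
      · exact ⟨1, one_pos, fun h' => absurd h' h⟩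
    obtain ⟨δ₁, hδ₁0, hδ₁⟩ : ∃ δ₁, 0 < δ₁ ∧ ∀ δ, 0 < δ → δ < δ₁ →
        L^2 * (B + e * δ^2) < (L + c * δ)^2 * B := by
      by_cases hcase : L^2 * e ≤ c^2 * B
      · refine ⟨1, one_pos, fun δ hδ0 _ => ?_⟩
        rcases eq_or_lt_of_le hLnn with hL0 | hL0
        · have h0 : 0 < c*c*(δ*δ)*B :=
            mul_pos (mul_pos (mul_pos hcpos hcpos) (mul_pos hδ0 hδ0)) hBpos
          rw [← hL0]
          nlinarith [h0]
        · nlinarith [mul_le_mul_of_nonneg_right hcase (sq_nonneg δ),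
            mul_pos (mul_pos (mul_pos hL0 hcpos) hδ0) hBpos]
      · push_neg at hcase
        have hLpos : 0 < L := by
          rcases eq_or_lt_of_le hLnn with h|h
          · exfalso
            rw [← h] at hcase
            nlinarith [mul_pos (mul_pos hcpos hcpos) hBpos]
          · exact h
        refine ⟨2*L*c*B / (L^2*e - c^2*B),
          div_pos (by positivity) (by linarith), fun δ hδ0 hδlt => ?_⟩
        have hmul : δ * (L^2*e - c^2*B) < 2*L*c*B :=
          (lt_div_iff₀ (by linarith)).mp hδlt
        nlinarith [mul_lt_mul_of_pos_left hmul hδ0]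
    refine ⟨min (min gL gR) δ₁, lt_min (lt_min hgL0 hgR0) hδ₁0,
      fun δ hδ0 hδlt wk wk1 hdiff havg => ?_⟩
    have hδgL : δ < gL := lt_of_lt_of_le hδlt (le_trans (min_le_left _ _) (min_le_left _ _))
    have hδgR : δ < gR := lt_of_lt_of_le hδlt (le_trans (min_le_left _ _) (min_le_right _ _))
    have hδδ₁ : δ < δ₁ := lt_of_lt_of_le hδlt (min_le_right _ _)
    have havg' : wk * rk + wk1 * rk1 = w' ⟨k, hk⟩ * (rk + rk1) := (div_eq_iff hsne).mp havg
    have hwk1e : wk1 = wk + δ := by linarith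
    have hwkeq : wk * (rk + rk1) = w' ⟨k, hk⟩ * (rk + rk1) - δ * rk1 := by
      rw [hwk1e] at havg'; linear_combination havg'
    have hwk1eq : wk1 * (rk + rk1) = w' ⟨k, hk⟩ * (rk + rk1) + δ * rk := by
      rw [hwk1e] at havg' ⊢; linear_combination havg'
    have hwkub : wk ≤ w' ⟨k, hk⟩ := by
      have h1 : wk * (rk+rk1) ≤ w' ⟨k, hk⟩ * (rk+rk1) := by
        nlinarith [mul_nonneg hδ0.le hrk1nn]
      exact le_of_mul_le_mul_right h1 hs
    have hwklb : w' ⟨k, hk⟩ - δ ≤ wk := by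
      have h1 : (w' ⟨k, hk⟩ - δ) * (rk+rk1) ≤ wk * (rk+rk1) := by
        nlinarith [mul_nonneg hδ0.le hrknn]
      exact le_of_mul_le_mul_right h1 hs
    have hwk1lb : w' ⟨k, hk⟩ ≤ wk1 := by
      have h1 : w' ⟨k, hk⟩ * (rk+rk1) ≤ wk1 * (rk+rk1) := by
        nlinarith [mul_nonneg hδ0.le hrknn]
      exact le_of_mul_le_mul_right h1 hs
    have hwk1ub : wk1 ≤ w' ⟨k, hk⟩ + δ := by
      have h1 : wk1 * (rk+rk1) ≤ (w' ⟨k, hk⟩ + δ) * (rk+rk1) := by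
        nlinarith [mul_nonneg hδ0.le hrk1nn]
      exact le_of_mul_le_mul_right h1 hs
    have hSM : StrictMono (expandAt k hk w' wk wk1) := by
      apply strictMono_expandAt k hk w' wk wk1 ?_ (by linarith) ?_ hw
      · intro h
        have := hgLle h
        linarith
      · intro h
        have := hgRle h
        linarith
    refine ⟨hSM, ?_⟩
    have hmr : rMerge k hk (expandAt k hk r' rk rk1) = r' := by
      unfold rMerge
      rw [expandAt_apply_k, expandAt_apply_k1]
      exact mergeAt_expandAt k hk r' rk rk1 _ hrsum
    have hmd : rMerge k hk (expandAt k hk d' dk dk1) = d' := by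
      unfold rMerge
      rw [expandAt_apply_k, expandAt_apply_k1]
      exact mergeAt_expandAt k hk d' dk dk1 _ hdsum
    have hmw : wMerge k hk (expandAt k hk r' rk rk1) (expandAt k hk w' wk wk1) = w' := by
      unfold wMerge
      rw [expandAt_apply_k, expandAt_apply_k1, expandAt_apply_k, expandAt_apply_k1]
      exact mergeAt_expandAt k hk w' wk wk1 _ havg.symm
    have hs'' : expandAt k hk r' rk rk1 ⟨k, Nat.lt_succ_of_lt hk⟩
        + expandAt k hk r' rk rk1 ⟨k+1, Nat.succ_lt_succ hk⟩ ≠ 0 := by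
      rw [expandAt_apply_k, expandAt_apply_k1]; exact hsne
    have hsumr : ∑ j, expandAt k hk r' rk rk1 j = R := by
      have h1 := sum_rMerge k hk (expandAt k hk r' rk rk1)
      rw [hmr] at h1
      rw [hRdef]
      exact h1.symm
    have hsumd : ∑ j, expandAt k hk d' dk dk1 j = Dd := by
      have h1 := sum_rMerge k hk (expandAt k hk d' dk dk1)
      rw [hmd] at h1
      rw [hDdef]
      exact h1.symm
    have hnum : ∑ j, expandAt k hk w' wk wk1 j
        * (R * expandAt k hk d' dk dk1 j - Dd * expandAt k hk r' rk rk1 j) = L + c * δ := by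
      have h2 := sum_L_merge k hk (expandAt k hk r' rk rk1) (expandAt k hk d' dk dk1)
        (expandAt k hk w' wk wk1) R Dd hs''
      rw [hmr, hmd, hmw] at h2
      rw [expandAt_apply_k, expandAt_apply_k1, expandAt_apply_k, expandAt_apply_k1,
        expandAt_apply_k, expandAt_apply_k1] at h2
      rw [hLdef, hcdef]
      linear_combination -h2 - R*(dk*rk1 - rk*dk1)/(rk+rk1) * hdiff
    have hden : ∑ j, expandAt k hk w' wk wk1 j ^ 2 * expandAt k hk r' rk rk1 j
        = B + e * δ^2 := by
      have h3 := sum_B_merge k hk (expandAt k hk r' rk rk1) (expandAt k hk w' wk wk1) hs''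
      rw [hmr, hmw] at h3
      rw [expandAt_apply_k, expandAt_apply_k1, expandAt_apply_k, expandAt_apply_k1] at h3
      rw [hBdef, hedef]
      linear_combination -h3 + rk*rk1/(rk+rk1) * (wk1 - wk + δ) * hdiff
    have hBα : 0 < B + e * δ^2 := by nlinarith [mul_nonneg henn (sq_nonneg δ)]
    have hLα : 0 < L + c * δ := by nlinarith [mul_pos hcpos hδ0]
    have hsq : L^2 * (B + e * δ^2) < (L + c * δ)^2 * B := hδ₁ δ hδ0 hδδ₁
    have goal2 : seqMu (expandAt k hk r' rk rk1) (expandAt k hk d' dk dk1)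
        (expandAt k hk w' wk wk1) = (L + c * δ) / Real.sqrt (B + e * δ^2) := by
      simp only [seqMu]
      rw [hsumr, hsumd, hnum, hden]
    have goal1 : seqMu r' d' w' = L / Real.sqrt B := rfl
    rw [goal1, goal2, div_lt_div_iff₀ hsB (Real.sqrt_pos.mpr hBα)]
    have key : (L * Real.sqrt (B + e * δ^2))^2 < ((L + c * δ) * Real.sqrt B)^2 := by
      rw [mul_pow, mul_pow, Real.sq_sqrt hBα.le, Real.sq_sqrt hBpos.le]
      exact hsq
    exact lt_of_pow_lt_pow_left₀ 2 (mul_nonneg hLα.le (Real.sqrt_nonneg _)) key
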